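/- Let A be a unitary operator on ℓ²(ℕ) whose matrix with respect to the canonical basis is banded below in the sense that A_{jk} = 0 whenever j > f(k) for an increasing function f : ℕ → ℕ with f(n) ≥ n. Let τ, τ' : ℕ → ℝ_{>0} be weight functions with ∑_{j=1}^{f(k)} τ(j) ≤ τ'(k) for all k. Then for every u ∈ ℓ²_{τ'}(ℕ), Au ∈ ℓ²_τ(ℕ) with ‖Au‖_τ ≤ ‖u‖_{τ'}. -/

import Mathlib

open scoped ENNReal NNReal


/-- Weighted bound for a banded unitary operator: if `A` is unitary on `ℓ²(ℕ)` with
matrix entries `A_{jk} = 0` for `j > f(k)` (with `f` increasing and `f(n) ≥ n`), and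
the weights satisfy `∑_{j=0}^{f(k)} τ(j) ≤ τ'(k)`, then `‖Au‖_τ ≤ ‖u‖_{τ'}` for every
`u ∈ ℓ²_{τ'}(ℕ)`. -/
theorem banded_unitary_weighted_bound
    (A : lp (fun _ : ℕ => ℂ) 2 →L[ℂ] lp (fun _ : ℕ => ℂ) 2)
    (hA : A ∈ unitary (lp (fun _ : ℕ => ℂ) 2 →L[ℂ] lp (fun _ : ℕ => ℂ) 2))
    (f : ℕ → ℕ) (hf : Monotone f) (hfn : ∀ n, n ≤ f n)
    (hband : ∀ j k : ℕ, f k < j → (A (lp.single 2 k 1)) j = 0)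
    (τ τ' : ℕ → ℝ) (hτ : ∀ j, 0 < τ j) (hτ' : ∀ j, 0 < τ' j)
    (hwt : ∀ k, ∑ j ∈ Finset.range (f k + 1), τ j ≤ τ' k)
    (u : lp (fun _ : ℕ => ℂ) 2)
    (hu : Summable (fun j => ‖u j‖ ^ 2 * τ' j)) :
    Summable (fun j => ‖(A u) j‖ ^ 2 * τ j) ∧
      ∑' j, ‖(A u) j‖ ^ 2 * τ j ≤ ∑' j, ‖u j‖ ^ 2 * τ' j := by
  classical
  have hp : (0:ℝ) < (2 : ℝ≥0∞).toReal := by norm_num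
  have hrpow : ∀ x : ℝ, x ^ (2 : ℝ≥0∞).toReal = x ^ 2 := by
    intro x
    rw [show (2 : ℝ≥0∞).toReal = ((2:ℕ):ℝ) by norm_num, Real.rpow_natCast]
  -- summability of squares of u
  have husq : Summable (fun k => ‖u k‖ ^ 2) := by
    have h := lp.memℓp u
    rw [memℓp_gen_iff hp] at h
    simpa [hrpow] using h
  -- pointwise key inequality
  have key : ∀ j, ‖(A u) j‖ ^ 2 ≤ ∑' k, (if j ≤ f k then ‖u k‖ ^ 2 else 0) := by
    intro j
    set e : lp (fun _ : ℕ => ℂ) 2 := lp.single 2 j 1 with he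
    set v : lp (fun _ : ℕ => ℂ) 2 := ContinuousLinearMap.adjoint A e with hv
    have hAv : A v = e := by
      have h1 : A * star A = 1 := (Unitary.mem_iff.mp hA).2
      have : A (star A e) = (A * star A) e := rfl
      rw [hv, ← ContinuousLinearMap.star_eq_adjoint, this, h1]
      rfl
    have hnorme : ‖e‖ = 1 := by
      rw [he]
      simpa using lp.norm_single (E := fun _ : ℕ => ℂ) hp (fun _ => (1:ℂ)) j
    have hnormv : ‖v‖ = 1 := by
      have h1 : (inner ℂ v v : ℂ) = inner ℂ e e := by
        rw [hv]
        rw [ContinuousLinearMap.adjoint_inner_left]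
        rw [← hv, hAv]
      have h2 : ‖v‖ ^ 2 = ‖e‖ ^ 2 := by
        rw [← inner_self_eq_norm_sq (𝕜 := ℂ) v, ← inner_self_eq_norm_sq (𝕜 := ℂ) e, h1]
      nlinarith [norm_nonneg v, norm_nonneg e, hnorme]
    -- coordinates of v vanish when f k < j
    have hvcoord : ∀ k, f k < j → v k = 0 := by
      intro k hk
      have h1 : (inner ℂ (lp.single 2 k (1:ℂ)) v : ℂ) = v k := by
        rw [lp.inner_single_left]
        simp [RCLike.inner_apply]
      have h2 : (inner ℂ (lp.single 2 k (1:ℂ)) v : ℂ)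
          = inner ℂ (A (lp.single 2 k (1:ℂ))) e := by
        rw [hv, ContinuousLinearMap.adjoint_inner_right]
      rw [he, lp.inner_single_right] at h2
      rw [← h1, h2, hband j k hk]
      simp [RCLike.inner_apply]
    -- the truncated vector w
    set w : ℕ → ℂ := fun k => if j ≤ f k then u k else 0 with hwdef
    have hwmem : Memℓp w 2 := by
      apply memℓp_gen
      have husq2 : Summable (fun k => ‖u k‖ ^ (2 : ℝ≥0∞).toReal) := by
        have h := lp.memℓp u
        rwa [memℓp_gen_iff hp] at h
      refine Summable.of_nonneg_of_le (fun k => by positivity) (fun k => ?_) husq2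
      rw [hwdef]
      dsimp only
      split_ifs
      · exact le_refl _
      · simp only [norm_zero]
        rw [Real.zero_rpow hp.ne']
        positivity
    set W : lp (fun _ : ℕ => ℂ) 2 := ⟨w, hwmem⟩ with hW
    have hWc : ∀ k, W k = w k := fun k => rfl
    have h1 : (A u) j = inner ℂ v u := by
      rw [hv, ContinuousLinearMap.adjoint_inner_left, he, lp.inner_single_left]
      simp [RCLike.inner_apply]
    have h2 : (inner ℂ v u : ℂ) = inner ℂ v W := by
      rw [lp.inner_eq_tsum, lp.inner_eq_tsum]
      congr 1
      funext k
      rw [hWc k, hwdef]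
      dsimp only
      split_ifs with h
      · rfl
      · rw [hvcoord k (not_le.mp h)]
        simp [RCLike.inner_apply]
    have h3 : ‖(A u) j‖ ≤ ‖W‖ := by
      rw [h1, h2]
      calc ‖(inner ℂ v W : ℂ)‖ ≤ ‖v‖ * ‖W‖ := norm_inner_le_norm v W
        _ = ‖W‖ := by rw [hnormv, one_mul]
    have h4 : ‖W‖ ^ 2 = ∑' k, (if j ≤ f k then ‖u k‖ ^ 2 else 0) := by
      have := lp.norm_rpow_eq_tsum hp W
      rw [hrpow] at this
      rw [this]
      congr 1
      funext k
      rw [hWc k, hwdef]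
      dsimp only
      split_ifs
      · rw [hrpow]
      · rw [norm_zero, Real.zero_rpow hp.ne']
    calc ‖(A u) j‖ ^ 2 ≤ ‖W‖ ^ 2 := by
          exact pow_le_pow_left₀ (norm_nonneg _) h3 2
      _ = _ := h4
  -- now the ENNReal computation
  set g : ℕ → ℝ := fun j => ‖(A u) j‖ ^ 2 * τ j with hg
  set h : ℕ → ℝ := fun k => ‖u k‖ ^ 2 * τ' k with hh
  have hgnn : ∀ j, 0 ≤ g j := fun j => mul_nonneg (by positivity) (hτ j).le
  have hhnn : ∀ k, 0 ≤ h k := fun k => mul_nonneg (by positivity) (hτ' k).le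
  have hSsummable : ∀ j, Summable (fun k => if j ≤ f k then ‖u k‖ ^ 2 else 0) := by
    intro j
    refine Summable.of_nonneg_of_le (fun k => ?_) (fun k => ?_) husq
    · split_ifs
      · positivity
      · exact le_rfl
    · split_ifs
      · exact le_rfl
      · positivity
  have main : ∑' j, ENNReal.ofReal (g j) ≤ ∑' k, ENNReal.ofReal (h k) := by
    calc ∑' j, ENNReal.ofReal (g j)
        ≤ ∑' j, ∑' k, (if j ≤ f k then ENNReal.ofReal (‖u k‖ ^ 2) else 0)
            * ENNReal.ofReal (τ j) := by
          apply ENNReal.tsum_le_tsum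
          intro j
          have step1 : ENNReal.ofReal (g j)
              ≤ ENNReal.ofReal ((∑' k, (if j ≤ f k then ‖u k‖ ^ 2 else 0)) * τ j) := by
            apply ENNReal.ofReal_le_ofReal
            exact mul_le_mul_of_nonneg_right (key j) (hτ j).le
          refine step1.trans (le_of_eq ?_)
          rw [ENNReal.ofReal_mul (tsum_nonneg (fun k => by positivity))]
          rw [ENNReal.ofReal_tsum_of_nonneg (fun k => by positivity) (hSsummable j)]
          rw [ENNReal.tsum_mul_right]
          congr 1
          exact tsum_congr fun k => by split_ifs <;> simp
      _ = ∑' k, ∑' j, (if j ≤ f k then ENNReal.ofReal (‖u k‖ ^ 2) else 0)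
            * ENNReal.ofReal (τ j) := ENNReal.tsum_comm
      _ ≤ ∑' k, ENNReal.ofReal (h k) := by
          apply ENNReal.tsum_le_tsum
          intro k
          have hinner : ∑' j, (if j ≤ f k then ENNReal.ofReal (‖u k‖ ^ 2) else 0)
              * ENNReal.ofReal (τ j)
              = ∑ j ∈ Finset.range (f k + 1),
                  ENNReal.ofReal (‖u k‖ ^ 2) * ENNReal.ofReal (τ j) := by
            rw [tsum_eq_sum (s := Finset.range (f k + 1))]
            · apply Finset.sum_congr rfl
              intro j hj
              rw [if_pos (Nat.lt_succ_iff.mp (Finset.mem_range.mp hj))]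
            · intro j hj
              rw [if_neg, zero_mul]
              simpa using Finset.mem_range.not.mp hj
          rw [hinner, ← Finset.mul_sum, ← ENNReal.ofReal_sum_of_nonneg
            (fun j _ => (hτ j).le), ← ENNReal.ofReal_mul (by positivity)]
          exact ENNReal.ofReal_le_ofReal
            (mul_le_mul_of_nonneg_left (hwt k) (by positivity))
  have hhtop : ∑' k, ENNReal.ofReal (h k) ≠ ⊤ := by
    rw [← ENNReal.ofReal_tsum_of_nonneg hhnn hu]
    exact ENNReal.ofReal_ne_top
  have hgtop : ∑' j, ENNReal.ofReal (g j) ≠ ⊤ := ne_top_of_le_ne_top hhtop main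
  have hgsum : Summable g := by
    have h1 : ∀ j, ENNReal.ofReal (g j) = ((g j).toNNReal : ℝ≥0∞) := fun j => rfl
    have h2 : Summable (fun j => (g j).toNNReal) := by
      rw [← ENNReal.tsum_coe_ne_top_iff_summable]
      simpa [← h1] using hgtop
    have h3 := NNReal.summable_coe.mpr h2
    have h4 : ∀ j, ((g j).toNNReal : ℝ) = g j := fun j => Real.coe_toNNReal _ (hgnn j)
    simpa [h4] using h3
  refine ⟨hgsum, ?_⟩
  have h5 : ENNReal.ofReal (∑' j, g j) ≤ ENNReal.ofReal (∑' k, h k) := by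
    rw [ENNReal.ofReal_tsum_of_nonneg hgnn hgsum, ENNReal.ofReal_tsum_of_nonneg hhnn hu]
    exact main
  exact (ENNReal.ofReal_le_ofReal_iff (tsum_nonneg hhnn)).mp h5
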